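/- In the Helmholtz-based uniqueness step: if u_h ∈ [L²(Ω)]³ satisfies (u_h, ε∇φ̃ + ∇×ψ̃) + (ψ̃, ε∇s₀) = 0 where u_h = ε⁻¹∇×ψ̃ + ∇φ̃ + η̃ is its own Helmholtz decomposition with η̃ ∈ 𝓗_{εn,0}(Ω), ∇·(εψ̃) = 0, and s₀ ∈ H¹(Ω), then (ε(u_h - η̃), u_h - η̃) = -(ψ̃, ε∇s₀); in particular if additionally (ψ̃, ε∇s₀) = 0 then u_h = η̃ is ε-harmonic. -/
import Mathlib

open scoped RealInnerProductSpace

/-- In the Helmholtz-based uniqueness step: if `u_h ∈ [L²(Ω)]³`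
satisfies `(u_h, ε∇φ̃ + ∇×ψ̃) + (ψ̃, ε∇s₀) = 0` where
`u_h = ε⁻¹∇×ψ̃ + ∇φ̃ + η̃` is its own Helmholtz decomposition with
`η̃ ∈ 𝓗_{εn,0}(Ω)`, `∇·(εψ̃) = 0`, and `s₀ ∈ H¹(Ω)`, then
`(ε(u_h - η̃), u_h - η̃) = -(ψ̃, ε∇s₀)`; in particular if additionally
`(ψ̃, ε∇s₀) = 0` then `u_h = η̃` is ε-harmonic.

Abstraction: `H1` indexes `H¹(Ω)` (gradient `grad`), `H0c` indexes `H¹_{0c}(Ω)`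
(gradient `gradC`), `Hc` indexes `H₀(curl;Ω)` (value `val`, curl `curl`);
`η̃ ∈ 𝓗_{εn,0}(Ω)` is expressed by the weak characterization `(η̃, ε∇φ) = 0` and
`(η̃, ∇×ψ) = 0` (ε-orthogonality to gradients and to ε⁻¹-curls); the gauge
`∇·(εψ̃) = 0` with vanishing fluxes is expressed weakly via `H¹_{0c}`. -/
theorem stmt_18
    {V H1 H0c Hc : Type*}
    [NormedAddCommGroup V] [InnerProductSpace ℝ V]
    (eps epsInv : V →ₗ[ℝ] V)
    (hSym : ∀ a b : V, ⟪eps a, b⟫ = ⟪a, eps b⟫)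
    (hPos : ∀ a : V, a ≠ 0 → 0 < ⟪eps a, a⟫)
    (hInv : ∀ a : V, eps (epsInv a) = a)
    (grad : H1 → V) (gradC : H0c → V) (val curl : Hc → V)
    (uh η : V) (ψt : Hc) (φt : H1) (s0 : H1)
    -- η̃ ∈ 𝓗_{εn,0}(Ω)
    (hη1 : ∀ φ : H1, ⟪η, eps (grad φ)⟫ = 0)
    (hη2 : ∀ ψ : Hc, ⟪η, curl ψ⟫ = 0)
    -- gauge: ∇·(εψ̃) = 0 with vanishing fluxes
    (hGauge : ∀ r : H0c, ⟪eps (val ψt), gradC r⟫ = 0)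
    -- the Helmholtz decomposition of u_h
    (hDec : uh = epsInv (curl ψt) + grad φt + η)
    -- the hypothesis equation
    (hEq : ⟪uh, eps (grad φt) + curl ψt⟫ + ⟪val ψt, eps (grad s0)⟫ = 0) :
    ⟪eps (uh - η), uh - η⟫ = -⟪val ψt, eps (grad s0)⟫ ∧
      (⟪val ψt, eps (grad s0)⟫ = 0 → uh = η) := by
  have hd : uh - η = epsInv (curl ψt) + grad φt := by rw [hDec]; abel
  have heps : eps (uh - η) = curl ψt + eps (grad φt) := by
    rw [hd, map_add, hInv]
  have h1 : ⟪eps (uh - η), η⟫ = 0 := by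
    rw [heps, inner_add_left, real_inner_comm, hη2, real_inner_comm, hη1]; ring
  have h2 : ⟪eps (uh - η), uh⟫ = -⟪val ψt, eps (grad s0)⟫ := by
    rw [heps]
    have h3 : ⟪curl ψt + eps (grad φt), uh⟫ = ⟪uh, eps (grad φt) + curl ψt⟫ := by
      rw [real_inner_comm, add_comm]
    rw [h3]; linarith
  have hmain : ⟪eps (uh - η), uh - η⟫ = -⟪val ψt, eps (grad s0)⟫ := by
    rw [inner_sub_right, h1, h2]; ring
  refine ⟨hmain, fun h0 => ?_⟩
  by_contra hne
  have : uh - η ≠ 0 := sub_ne_zero.mpr hne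
  have := hPos _ this
  rw [hmain, h0] at this
  simp at this
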